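/- arXiv:1007.5094 — 2 statements merged into one kernel-verified Lean document; each statement's English description precedes it below -/
import Mathlib

section
/- Synchronization operations on distinct node pairs commute: ∂_{a,b} ∂_{c,d} A = ∂_{c,d} ∂_{a,b} A for a Reo automaton A with a,b,c,d in its alphabet and {a,b} ∩ {c,d} = ∅. -/
/-- A guard in disjunctive normal form consists of conjunctions of literals;
a single such conjunction (clause) is given by its positive and negative nodes. -/
structure Clause (N : Type) where
  pos : Finset N
  neg : Finset N

/-- Semantics of a conjunction of literals, as the set of satisfying atoms
(truth assignments) of the free Boolean algebra over `N`. -/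
def Clause.sem {N : Type} (g : Clause N) : Set (N → Bool) :=
  {v | (∀ x ∈ g.pos, v x = true) ∧ (∀ x ∈ g.neg, v x = false)}

/-- `g∖_{ab}`: delete all occurrences of literals over `a` and `b` from `g`. -/
def Clause.del {N : Type} [DecidableEq N] (g : Clause N) (a b : N) : Clause N :=
  ⟨(g.pos.erase a).erase b, (g.neg.erase a).erase b⟩

/-- Transition relations of a (normalized) Reo automaton, whose guard labels
are conjunctions of literals. -/
abbrev CTransRel (N Q : Type) := Q → Clause N → Finset N → Q → Prop

/-- The synchronization `∂_{a,b}` of a normalized Reo automaton: keep the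
transitions with `g ≰ ¬a∧¬b` and `a ∈ f ⟺ b ∈ f`, deleting `a,b` from the
guard and the firing set. -/
def syncRel {N Q : Type} [DecidableEq N] (δ : CTransRel N Q) (a b : N) :
    CTransRel N Q :=
  fun q g' f' q' => ∃ g f, δ q g f q' ∧
    ¬ (Clause.sem g ⊆ Clause.sem ⟨∅, {a, b}⟩) ∧
    (a ∈ f ↔ b ∈ f) ∧
    g' = g.del a b ∧ f' = (f.erase a).erase b

lemma Clause.sem_del_mono {N : Type} [DecidableEq N] (g : Clause N) (a b : N) :
    Clause.sem g ⊆ Clause.sem (g.del a b) := by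
  rintro v ⟨h1, h2⟩
  exact ⟨fun x hx => h1 x (Finset.mem_of_mem_erase (Finset.mem_of_mem_erase hx)),
    fun x hx => h2 x (Finset.mem_of_mem_erase (Finset.mem_of_mem_erase hx))⟩

lemma sem_pair_iff {N : Type} [DecidableEq N] (a b : N) (v : N → Bool) :
    v ∈ Clause.sem (Clause.mk ∅ ({a, b} : Finset N)) ↔ v a = false ∧ v b = false := by
  simp [Clause.sem]

lemma erase4_comm {N : Type} [DecidableEq N] (s : Finset N) (a b c d : N) :
    (((s.erase c).erase d).erase a).erase b = (((s.erase a).erase b).erase c).erase d := by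
  ext x; simp only [Finset.mem_erase]; tauto

lemma del_comm {N : Type} [DecidableEq N] (g : Clause N) (a b c d : N) :
    (g.del c d).del a b = (g.del a b).del c d := by
  simp only [Clause.del, erase4_comm]

lemma syncRel_aux {N Q : Type} [DecidableEq N] (δ : CTransRel N Q)
    (a b c d : N) (hac : a ≠ c) (had : a ≠ d) (hbc : b ≠ c) (hbd : b ≠ d)
    (q : Q) (g' : Clause N) (f' : Finset N) (q' : Q)
    (h : syncRel (syncRel δ c d) a b q g' f' q') :
    syncRel (syncRel δ a b) c d q g' f' q' := by
  obtain ⟨g1, f1, ⟨g, f, hδ, hgcd, hfcd, rfl, rfl⟩, hgab, hfab, rfl, rfl⟩ := h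
  -- witnesses
  obtain ⟨w, hw, hwcd⟩ := Set.not_subset.mp hgcd
  obtain ⟨v0, hv0, hv0ab⟩ := Set.not_subset.mp hgab
  rw [sem_pair_iff] at hwcd hv0ab
  -- build v ∈ sem g with v a, v b as v0
  set v : N → Bool := fun x => if x = c then w c else if x = d then w d else v0 x with hv
  have hvmem : v ∈ Clause.sem g := by
    constructor
    · intro x hx
      by_cases h1 : x = c
      · subst h1; simpa [hv] using hw.1 x hx
      by_cases h2 : x = d
      · subst h2; simpa [hv, h1] using hw.1 x hx
      · simp only [hv, h1, h2, if_false]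
        exact hv0.1 x (by simp [Clause.del, Finset.mem_erase, h1, h2, hx])
    · intro x hx
      by_cases h1 : x = c
      · subst h1; simpa [hv] using hw.2 x hx
      by_cases h2 : x = d
      · subst h2; simpa [hv, h1] using hw.2 x hx
      · simp only [hv, h1, h2, if_false]
        exact hv0.2 x (by simp [Clause.del, Finset.mem_erase, h1, h2, hx])
  have hfab' : a ∈ f ↔ b ∈ f := by
    simpa [Finset.mem_erase, hac, had, hbc, hbd] using hfab
  refine ⟨g.del a b, (f.erase a).erase b,
    ⟨g, f, hδ, ?_, hfab', rfl, rfl⟩, ?_, ?_, ?_, ?_⟩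
  · -- ¬ sem g ⊆ sem ⟨∅,{a,b}⟩
    refine Set.not_subset.mpr ⟨v, hvmem, ?_⟩
    rw [sem_pair_iff]
    simpa [hv, hac, had, hbc, hbd, sem_pair_iff] using hv0ab
  · -- ¬ sem (g.del a b) ⊆ sem ⟨∅,{c,d}⟩
    refine Set.not_subset.mpr ⟨w, Clause.sem_del_mono g a b hw, ?_⟩
    rw [sem_pair_iff]; exact hwcd
  · simp [Finset.mem_erase, hac.symm, hbc.symm, had.symm, hbd.symm, hfcd]
  · exact del_comm g a b c d
  · exact erase4_comm f a b c d

/-- Synchronization operations on distinct node pairs commute: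
`∂_{a,b} ∂_{c,d} A = ∂_{c,d} ∂_{a,b} A` when `{a,b} ∩ {c,d} = ∅`. -/
theorem stmt_11 {N Q : Type} [DecidableEq N] (δ : CTransRel N Q)
    (a b c d : N) (hdisj : ({a, b} : Finset N) ∩ {c, d} = ∅) :
    syncRel (syncRel δ c d) a b = syncRel (syncRel δ a b) c d := by
  have h : ∀ x ∈ ({a, b} : Finset N), x ∉ ({c, d} : Finset N) := by
    intro x hx hx'
    have : x ∈ ({a, b} : Finset N) ∩ {c, d} := Finset.mem_inter.mpr ⟨hx, hx'⟩
    simp [hdisj] at this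
  have hac : a ≠ c := by have := h a (by simp); simp at this; tauto
  have had : a ≠ d := by have := h a (by simp); simp at this; tauto
  have hbc : b ≠ c := by have := h b (by simp); simp at this; tauto
  have hbd : b ≠ d := by have := h b (by simp); simp at this; tauto
  funext q g' f' q'
  ext
  constructor
  · exact syncRel_aux δ a b c d hac had hbc hbd q g' f' q'
  · exact syncRel_aux δ c d a b hac.symm hbc.symm had.symm hbd.symm q g' f' q'
end

section
/- The synchronization operation preserves reactivity: if every transition q --g|f--> q' of A satisfies g ≤ ∧f with g a conjunction of literals, then every transition of ∂_{a,b}A satisfies (g∖_{ab}) ≤ ∧(f∖{a,b}). -/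
/-- The conjunction `∧f` of a finite set `f` of nodes. -/
def conjNodes {N : Type} (f : Finset N) : Set (N → Bool) := {v | ∀ x ∈ f, v x = true}

/-- Synchronization preserves reactivity: if every transition `q --g|f--> q'`
of a normalized automaton satisfies `g ≤ ∧f`, then every transition of
`∂_{a,b}A` satisfies `(g∖_{ab}) ≤ ∧(f∖{a,b})`. -/
theorem stmt_13 {N Q : Type} [DecidableEq N] (δ : CTransRel N Q) (a b : N)
    (hreact : ∀ q g f q', δ q g f q' → Clause.sem g ⊆ conjNodes f) :
    ∀ q g f q', syncRel δ a b q g f q' → Clause.sem g ⊆ conjNodes f := by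
  rintro q g' f' q' ⟨g, f, hδ, hns, _hab, rfl, rfl⟩ v hv
  -- sem g is nonempty
  obtain ⟨w, hw⟩ : (Clause.sem g).Nonempty := by
    by_contra h
    rw [Set.not_nonempty_iff_eq_empty] at h
    exact hns (h ▸ Set.empty_subset _)
  set v' : N → Bool := fun x => if x = a ∨ x = b then w x else v x with hv'
  have hv'g : v' ∈ Clause.sem g := by
    constructor
    · intro x hx
      by_cases h : x = a ∨ x = b
      · simp [hv', h, hw.1 x hx]
      · simp only [hv', h, if_false]
        exact hv.1 x (by
          push_neg at h
          exact Finset.mem_erase.2 ⟨h.2, Finset.mem_erase.2 ⟨h.1, hx⟩⟩)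
    · intro x hx
      by_cases h : x = a ∨ x = b
      · simp [hv', h, hw.2 x hx]
      · simp only [hv', h, if_false]
        exact hv.2 x (by
          push_neg at h
          exact Finset.mem_erase.2 ⟨h.2, Finset.mem_erase.2 ⟨h.1, hx⟩⟩)
  intro x hx
  obtain ⟨hxb, hxa, hxf⟩ : x ≠ b ∧ x ≠ a ∧ x ∈ f := by
    have := Finset.mem_erase.1 hx
    exact ⟨this.1, (Finset.mem_erase.1 this.2).1, (Finset.mem_erase.1 this.2).2⟩
  have := hreact q g f q' hδ hv'g x hxf
  simpa [hv', hxa, hxb] using this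
end
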